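/- (AEL distance amplification) Let n, d ≥ 1, q ≥ 2, let 0 ≤ λ and 0 ≤ δ₀ ≤ 1, let σ : Fin n × Fin d ≃ Fin n × Fin d be a bijection specifying a d-regular bipartite graph that is λ-mixing, and let C₀ ⊆ (Fin d → Fin q) be a code in which any two distinct codewords differ in at least δ₀·d coordinates. Let f, g : Fin n × Fin d → Fin q be such that every left row of f and every left row of g belongs to C₀. Define Δ^L(f,g) as the fraction of ℓ ∈ Fin n whose left rows of f and g differ, and Δ^R(f,g) as the fraction of r ∈ Fin n whose right rows of f and g differ. If Δ^L(f,g) > 0, then Δ^R(f,g) ≥ δ₀ − λ/Δ^L(f,g). -/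

import Mathlib

/-- A `d`-regular bipartite graph on left/right vertex sets `Fin n` with edge set
`Fin n × Fin d` (edge `(ℓ,i)` is the `i`-th edge of left vertex `ℓ`, and `σ (ℓ,i) = (r,j)`
means it is the `j`-th edge of right vertex `r`) is `λ`-mixing if the expander mixing
inequality holds for all real-valued functions on the two sides. -/
def IsMixing (n d : ℕ) (σ : Fin n × Fin d ≃ Fin n × Fin d) (lam : ℝ) : Prop :=
  ∀ F G : Fin n → ℝ,
    |(∑ e : Fin n × Fin d, F e.1 * G (σ e).1) / ((n : ℝ) * d)
        - ((∑ ℓ, F ℓ) / (n : ℝ)) * ((∑ r, G r) / (n : ℝ))|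
      ≤ lam * Real.sqrt ((∑ ℓ, F ℓ ^ 2) / (n : ℝ)) * Real.sqrt ((∑ r, G r ^ 2) / (n : ℝ))

/-- Fraction of left vertices `ℓ` at which the left rows of `f` and `g` differ. -/
noncomputable def deltaL (n d q : ℕ) (f g : Fin n × Fin d → Fin q) : ℝ :=
  ((Finset.univ.filter fun ℓ : Fin n =>
      (fun i : Fin d => f (ℓ, i)) ≠ fun i : Fin d => g (ℓ, i)).card : ℝ) / n

/-- Fraction of right vertices `r` at which the right rows of `f` and `g` differ. -/
noncomputable def deltaR (n d q : ℕ) (σ : Fin n × Fin d ≃ Fin n × Fin d)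
    (f g : Fin n × Fin d → Fin q) : ℝ :=
  ((Finset.univ.filter fun r : Fin n =>
      (fun j : Fin d => f (σ.symm (r, j))) ≠ fun j : Fin d => g (σ.symm (r, j))).card : ℝ) / n

/-- **AEL distance amplification.** If every left row of `f` and `g` lies in a code of
minimum distance `δ₀·d` and the graph is `λ`-mixing, then
`Δ^R(f,g) ≥ δ₀ - λ / Δ^L(f,g)` whenever `Δ^L(f,g) > 0`. -/
theorem ael_distance_amplification (n d q : ℕ) (hn : 1 ≤ n) (hd : 1 ≤ d) (hq : 2 ≤ q)
    (lam δ₀ : ℝ) (hlam : 0 ≤ lam) (hδ₀0 : 0 ≤ δ₀) (hδ₀1 : δ₀ ≤ 1)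
    (σ : Fin n × Fin d ≃ Fin n × Fin d) (hmix : IsMixing n d σ lam)
    (C₀ : Set (Fin d → Fin q))
    (hC₀ : ∀ u ∈ C₀, ∀ v ∈ C₀, u ≠ v → δ₀ * d ≤ (hammingDist u v : ℝ))
    (f g : Fin n × Fin d → Fin q)
    (hfL : ∀ ℓ : Fin n, (fun i => f (ℓ, i)) ∈ C₀)
    (hgL : ∀ ℓ : Fin n, (fun i => g (ℓ, i)) ∈ C₀)
    (hpos : 0 < deltaL n d q f g) :
    δ₀ - lam / deltaL n d q f g ≤ deltaR n d q σ f g := by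

  classical
  set S : Finset (Fin n) := Finset.univ.filter (fun ℓ : Fin n =>
      (fun i : Fin d => f (ℓ, i)) ≠ fun i : Fin d => g (ℓ, i)) with hSdef
  set T : Finset (Fin n) := Finset.univ.filter (fun r : Fin n =>
      (fun j : Fin d => f (σ.symm (r, j))) ≠ fun j : Fin d => g (σ.symm (r, j))) with hTdef
  have hDL : deltaL n d q f g = (S.card : ℝ) / n := rfl
  have hDR : deltaR n d q σ f g = (T.card : ℝ) / n := rfl
  have hnpos : (0:ℝ) < n := by exact_mod_cast hn
  have hdpos : (0:ℝ) < d := by exact_mod_cast hd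
  set F : Fin n → ℝ := fun ℓ => if ℓ ∈ S then 1 else 0 with hF
  set G : Fin n → ℝ := fun r => if r ∈ T then 1 else 0 with hG
  have hFsum : ∑ ℓ, F ℓ = S.card := by simp [hF, Finset.sum_ite_mem]
  have hGsum : ∑ r, G r = T.card := by simp [hG, Finset.sum_ite_mem]
  have hFsq : ∀ ℓ, F ℓ ^ 2 = F ℓ := by intro ℓ; simp only [hF]; split <;> norm_num
  have hGsq : ∀ r, G r ^ 2 = G r := by intro r; simp only [hG]; split <;> norm_num
  have hF2 : ∑ ℓ, F ℓ ^ 2 = S.card := by simp only [hFsq]; exact hFsum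
  have hG2 : ∑ r, G r ^ 2 = T.card := by simp only [hGsq]; exact hGsum
  have hScard : (S.card : ℝ) ≤ n := by
    exact_mod_cast le_trans (Finset.card_le_card (Finset.subset_univ S))
      (le_of_eq (by simp))
  have hTcard : (T.card : ℝ) ≤ n := by
    exact_mod_cast le_trans (Finset.card_le_card (Finset.subset_univ T))
      (le_of_eq (by simp))
  -- pointwise: differing edges go from S to T
  have hind : ∀ e : Fin n × Fin d, (if f e ≠ g e then (1:ℝ) else 0) ≤ F e.1 * G (σ e).1 := by
    intro e
    by_cases h : f e = g e
    · simp only [h, ne_eq, not_true_eq_false, if_neg, ite_false, not_not, if_pos]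
      have : (0:ℝ) ≤ F e.1 * G (σ e).1 := by
        apply mul_nonneg <;> · simp only [hF, hG]; split <;> norm_num
      simpa using this
    · have hSe : e.1 ∈ S := by
        simp only [hSdef, Finset.mem_filter, Finset.mem_univ, true_and]
        intro hc
        exact h (by have := congrFun hc e.2; simpa using this)
      have hTe : (σ e).1 ∈ T := by
        simp only [hTdef, Finset.mem_filter, Finset.mem_univ, true_and]
        intro hc
        have := congrFun hc (σ e).2
        simp only [Prod.mk.eta, Equiv.symm_apply_apply] at this
        exact h this
      simp [h, hSe, hTe, hF, hG]
  -- edge count lower bound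
  have hkey : δ₀ * d * S.card ≤ ∑ e : Fin n × Fin d, F e.1 * G (σ e).1 := by
    calc δ₀ * d * S.card = ∑ _ℓ ∈ S, δ₀ * d := by
          rw [Finset.sum_const, nsmul_eq_mul]; ring
      _ ≤ ∑ ℓ ∈ S, (hammingDist (fun i => f (ℓ, i)) (fun i => g (ℓ, i)) : ℝ) := by
          apply Finset.sum_le_sum
          intro ℓ hℓ
          have hne : (fun i : Fin d => f (ℓ, i)) ≠ fun i : Fin d => g (ℓ, i) := by
            simpa [hSdef] using hℓ
          exact hC₀ _ (hfL ℓ) _ (hgL ℓ) hne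
      _ ≤ ∑ ℓ : Fin n, (hammingDist (fun i => f (ℓ, i)) (fun i => g (ℓ, i)) : ℝ) := by
          apply Finset.sum_le_sum_of_subset_of_nonneg (Finset.subset_univ S)
          intro ℓ _ _; positivity
      _ = ∑ e : Fin n × Fin d, (if f e ≠ g e then (1:ℝ) else 0) := by
          rw [Fintype.sum_prod_type]
          apply Finset.sum_congr rfl
          intro ℓ _
          rw [Finset.sum_boole]
          simp [hammingDist]
      _ ≤ ∑ e : Fin n × Fin d, F e.1 * G (σ e).1 :=
          Finset.sum_le_sum fun e _ => hind e
  -- mixing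
  have hmix' := hmix F G
  rw [hFsum, hGsum, hF2, hG2] at hmix'
  have hs1 : Real.sqrt ((S.card : ℝ) / n) ≤ 1 := by
    rw [show (1:ℝ) = Real.sqrt 1 by simp]
    exact Real.sqrt_le_sqrt (by rw [div_le_one hnpos]; exact hScard)
  have hs2 : Real.sqrt ((T.card : ℝ) / n) ≤ 1 := by
    rw [show (1:ℝ) = Real.sqrt 1 by simp]
    exact Real.sqrt_le_sqrt (by rw [div_le_one hnpos]; exact hTcard)
  have hsqrt : lam * Real.sqrt ((S.card : ℝ) / n) * Real.sqrt ((T.card : ℝ) / n) ≤ lam := by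
    have h12 : Real.sqrt ((S.card : ℝ) / n) * Real.sqrt ((T.card : ℝ) / n) ≤ 1 :=
      mul_le_one₀ hs1 (Real.sqrt_nonneg _) hs2
    rw [mul_assoc]
    exact mul_le_of_le_one_right hlam h12
  have habs := (abs_le.mp (le_trans hmix' hsqrt)).2
  -- combine
  have hA : δ₀ * ((S.card : ℝ) / n) ≤ (∑ e : Fin n × Fin d, F e.1 * G (σ e).1) / ((n:ℝ) * d) := by
    have := div_le_div_of_nonneg_right hkey (by positivity : (0:ℝ) ≤ (n:ℝ) * d)
    calc δ₀ * ((S.card : ℝ) / n) = δ₀ * d * S.card / ((n:ℝ) * d) := by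
          field_simp
      _ ≤ _ := this
  have hαβ : δ₀ * ((S.card : ℝ) / n) ≤ ((S.card : ℝ) / n) * ((T.card : ℝ) / n) + lam := by
    calc δ₀ * ((S.card : ℝ) / n) ≤ _ := hA
      _ ≤ _ := by linarith [habs]
  rw [hDL, hDR]
  rw [hDL] at hpos
  have hS0 : (0:ℝ) < (S.card : ℝ) := by
    rcases div_pos_iff.mp hpos with ⟨h, _⟩ | ⟨h, _⟩
    · exact h
    · linarith
  rw [sub_le_iff_le_add, ← mul_le_mul_iff_of_pos_right hpos]
  calc δ₀ * ((S.card : ℝ) / n) ≤ ((S.card : ℝ) / n) * ((T.card : ℝ) / n) + lam := hαβ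
    _ = ((T.card : ℝ) / n + lam / ((S.card : ℝ) / n)) * ((S.card : ℝ) / n) := by
        field_simp
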